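/- Fix n ≥ 2. Let a, b, c, d ∈ ℂ with ad − bc = 1 and c ≠ 0, and let σ_k denote the k-th elementary symmetric function of the multiset of n+1 fixed-point multipliers of f(z) = (a z^n + b)/(c z^n + d), i.e. of the multiset obtained by mapping each root z (with multiplicity) of Φ(z) = c z^{n+1} − a z^n + d z − b to f′(z) = n z^{n−1}/(c z^n + d)². If (a′, b′, c′, d′) is another quadruple with a′d′ − b′c′ = 1, c′ ≠ 0 and b′c′ = bc (equal invariant X), then σ_k = σ′_k for every 0 ≤ k ≤ n+1 with k ≠ n, while σ_n − n^n (a^{n+1}b^{n−1} + c^{n−1}d^{n+1}) = σ′_n − n^n (a′^{n+1}b′^{n−1} + c′^{n−1}d′^{n+1}). (Theorem 2.6: every elementary symmetric function σ_k of the fixed-point multipliers with k ≠ n depends only on X, namely σ_k = n^k P_k(X), while σ_n = n^n (P_n(X) + Y).) -/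

import Mathlib

namespace Stmt13Aux

set_option maxHeartbeats 1000000

open Polynomial


noncomputable def Qc (e v : ℂ) : ℕ → ℂ
  | 0 => 2
  | 1 => v
  | (j+2) => v * Qc e v (j+1) - e * Qc e v j

lemma Qc_S (L v e ρ1 ρ2 : ℂ) (h1 : L * (ρ1 + ρ2) = v) (h2 : L^2 * (ρ1*ρ2) = e) :
    ∀ j, L^j * (ρ1^j + ρ2^j) = Qc e v j
  | 0 => by norm_num [Qc]
  | 1 => by simpa [Qc] using h1
  | (j+2) => by
      rw [Qc, ← Qc_S L v e ρ1 ρ2 h1 h2 (j+1), ← Qc_S L v e ρ1 ρ2 h1 h2 j, ← h1, ← h2]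
      ring

lemma Qc_pow (e v : ℂ) (he : e = 0) : ∀ j, Qc e v (j+1) = v^(j+1)
  | 0 => by simp [Qc]
  | (j+1) => by
      rw [show j+1+1 = j+2 from rfl, Qc, Qc_pow e v he j, he]
      ring

lemma prod_sub (s : Multiset ℂ) (ρ : ℂ) :
    (s.map (fun z => z - ρ)).prod = (-1)^(s.card) * (s.map (fun z => ρ - z)).prod := by
  have : (s.map (fun z => z - ρ)) = (s.map (fun z => (-1) * (ρ - z))) := by
    apply Multiset.map_congr rfl; intro z _; ring
  rw [this, Multiset.prod_map_mul]
  congr 1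
  rw [Multiset.map_const', Multiset.prod_replicate]

/-- The core algebraic identity (Theorem 2.6 resultant computation). -/
lemma Ecore (k : ℕ) (a b c d r s : ℂ) (h : a*d - b*c = 1) (hab : a*b = c*d*(r*s)) :
    (c*d)^(k+3) * ((c*r^(k+3) - a*r^(k+2) + d*r - b) * (c*s^(k+3) - a*s^(k+2) + d*s - b))
    = b*c*( (a^(k+3)*b^(k+1) + c^(k+1)*d^(k+3)) * ((1+2*(b*c)) - c*d*(r+s))
        - (c*d)^(k+3)*(r^(k+3)+s^(k+3))
        + 2*(1+b*c) * ((c*d)^(k+2)*(r^(k+2)+s^(k+2)))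
        - (1+b*c)^2 * ((c*d)^(k+1)*(r^(k+1)+s^(k+1))) ) := by
  have hpow : a^(k+1)*b^(k+1) = c^(k+1)*d^(k+1)*(r^(k+1)*s^(k+1)) := by
    calc a^(k+1)*b^(k+1) = (a*b)^(k+1) := by ring
    _ = (c*d*(r*s))^(k+1) := by rw [hab]
    _ = c^(k+1)*d^(k+1)*(r^(k+1)*s^(k+1)) := by ring
  linear_combination
    ((-1)*c^3*d*r^2*s*c^(k+1)*d^(k+1)*r^(k+1)*s^(k+1) + (-1)*c^3*d*r*s^2*c^(k+1)*d^(k+1)*r^(k+1)*s^(k+1) + (1)*a*c^2*d*r*s*c^(k+1)*d^(k+1)*r^(k+1)*s^(k+1) + (2)*b*c^3*r*s*c^(k+1)*d^(k+1)*r^(k+1)*s^(k+1) + (-1)*c^2*d^2*r*s*c^(k+1)*d^(k+1)*r^(k+1) + (-1)*c^2*d^2*r*s*c^(k+1)*d^(k+1)*s^(k+1) + (-2)*b*c^3*r*s*a^(k+1)*b^(k+1) + (2)*b*c^2*d*r*c^(k+1)*d^(k+1)*r^(k+1) + (2)*b*c^2*d*s*c^(k+1)*d^(k+1)*s^(k+1)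 + (1)*c^2*r*s*c^(k+1)*d^(k+1)*r^(k+1)*s^(k+1) + (1)*a*b*c^2*r*a^(k+1)*b^(k+1) + (1)*a*b*c^2*s*a^(k+1)*b^(k+1) + (-1)*b^2*c^2*c^(k+1)*d^(k+1)*r^(k+1) + (-1)*b^2*c^2*c^(k+1)*d^(k+1)*s^(k+1) + (1)*b*c*d^2*c^(k+1)*d^(k+1) + (-1)*c^2*r*s*a^(k+1)*b^(k+1) + (-1)*b*c*c^(k+1)*d^(k+1)*r^(k+1) + (-1)*b*c*c^(k+1)*d^(k+1)*s^(k+1)) * h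
    + ((-1)*c^3*d*r*s*c^(k+1)*d^(k+1)*r^(k+1)*s^(k+1) + (1)*b*c^3*r*c^(k+1)*d^(k+1)*r^(k+1)*s^(k+1) + (1)*b*c^3*s*c^(k+1)*d^(k+1)*r^(k+1)*s^(k+1) + (-1)*c^2*d^2*r*c^(k+1)*d^(k+1)*r^(k+1) + (-1)*c^2*d^2*s*c^(k+1)*d^(k+1)*s^(k+1) + (1)*b*c^2*d*c^(k+1)*d^(k+1)*r^(k+1) + (1)*b*c^2*d*c^(k+1)*d^(k+1)*s^(k+1) + (1)*c^2*r*c^(k+1)*d^(k+1)*r^(k+1)*s^(k+1) + (1)*c^2*s*c^(k+1)*d^(k+1)*r^(k+1)*s^(k+1) + (-2)*a*b*c^2*a^(k+1)*b^(k+1) + (-1)*c*d^3*c^(k+1)*d^(k+1) + (1)*c*d*c^(k+1)*d^(k+1)*r^(k+1) + (1)*c*d*c^(k+1)*d^(k+1)*s^(k+1) + (-1)*a*c*a^(k+1)*b^(k+1)) * hab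
    + ((-2)*b^2*c^4*r*s + (1)*a*b^2*c^3*r + (1)*a*b^2*c^3*s + (-3)*b*c^3*r*s + (1)*a*b*c^2*r + (1)*a*b*c^2*s + (-1)*c^2*r*s) * hpow

lemma card_roots' (p : Polynomial ℂ) : p.roots.card = p.natDegree :=
  (splits_iff_card_roots.mp (IsAlgClosed.splits p))

lemma prod_roots_eval (p : Polynomial ℂ) (ρ : ℂ) :
    p.leadingCoeff * ((p.roots).map (fun z => ρ - z)).prod = p.eval ρ := by
  conv_rhs => rw [← C_leadingCoeff_mul_prod_multiset_X_sub_C (card_roots' p)]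
  rw [eval_mul, eval_C, eval_multiset_prod, Multiset.map_map]
  simp

lemma master (k : ℕ) (a b c d : ℂ) (h : a*d - b*c = 1) (hc : c ≠ 0) (t : ℂ) :
    (((C c * X ^ (k+3) - C a * X ^ (k+2) + C d * X - C b : Polynomial ℂ).roots).map
      (fun z => t - ((k+2 : ℕ) : ℂ) * z^(k+1) / (c * z^(k+2) + d)^2)).prod
    = (-1)^k * ( ((k+2:ℕ):ℂ)^(k+2) * (a^(k+3)*b^(k+1) + c^(k+1)*d^(k+3)) * t
        - (Qc (((k+2:ℕ):ℂ)^2*(b*c*(1+b*c))) (((k+2:ℕ):ℂ)*(1+2*(b*c)) - t) (k+3)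
           - 2*((k+2:ℕ):ℂ)*(1+b*c) * Qc (((k+2:ℕ):ℂ)^2*(b*c*(1+b*c))) (((k+2:ℕ):ℂ)*(1+2*(b*c)) - t) (k+2)
           + ((k+2:ℕ):ℂ)^2*(1+b*c)^2 * Qc (((k+2:ℕ):ℂ)^2*(b*c*(1+b*c))) (((k+2:ℕ):ℂ)*(1+2*(b*c)) - t) (k+1)) ) := by
  have hN : ((k+2:ℕ):ℂ) ≠ 0 := Nat.cast_ne_zero.mpr (by omega)
  set N : ℂ := ((k+2 : ℕ) : ℂ) with hNdef
  set Φ : Polynomial ℂ := C c * X^(k+3) - C a * X^(k+2) + C d * X - C b with hΦdef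
  have hdeg : Φ.natDegree = k+3 := by
    rw [hΦdef]; compute_degree!; simpa using hc
  have hΦ0 : Φ ≠ 0 := by
    intro h0; rw [h0] at hdeg; simp at hdeg
  have hlead : Φ.leadingCoeff = c := by
    rw [leadingCoeff, hdeg, hΦdef]; simp [coeff_X_pow, coeff_C]
  have hcard : Φ.roots.card = k+3 := by rw [card_roots' Φ, hdeg]
  have hevalρ : ∀ ρ : ℂ, ((Φ.roots).map (fun z => ρ - z)).prod = Φ.eval ρ / c := by
    intro ρ
    rw [← prod_roots_eval Φ ρ, hlead]
    field_simp
  have hroot : ∀ z ∈ Φ.roots, c*z^(k+3) - a*z^(k+2) + d*z - b = 0 := by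
    intro z hz
    have h2 := isRoot_of_mem_roots hz
    rw [hΦdef] at h2
    simpa [IsRoot] using h2
  have hfix : ∀ z ∈ Φ.roots, (c*z^(k+2)+d)*(a - c*z) = 1 := by
    intro z hz
    linear_combination (-c) * hroot z hz + h
  have hw : ((-1:ℂ))^k * ((-1:ℂ))^k = 1 := by
    rw [← pow_add]
    exact Even.neg_one_pow ⟨k, by ring⟩
  have hbinv : ((-1:ℂ)^k * (b/c))⁻¹ = (-1)^k * (c/b) := by
    rw [mul_inv, ← inv_pow, inv_neg, inv_one, inv_div]
  by_cases hb : b = 0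
  · subst hb
    have had : a*d = 1 := by linear_combination h
    have hd : d ≠ 0 := by
      intro h0
      rw [h0, mul_zero] at had
      exact zero_ne_one had
    have ha : a ≠ 0 := by
      intro h0
      rw [h0, zero_mul] at had
      exact zero_ne_one had
    set ψ : Polynomial ℂ := C c * X^(k+2) - C a * X^(k+1) + C d with hψdef
    have hfactor : Φ = X * ψ := by
      rw [hΦdef, hψdef, map_zero]
      ring
    have hψdeg : ψ.natDegree = k+2 := by
      rw [hψdef]; compute_degree! <;> simpa using hc
    have hψ0 : ψ ≠ 0 := by
      intro h0; rw [h0] at hψdeg; simp at hψdeg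
    have hψlead : ψ.leadingCoeff = c := by
      rw [leadingCoeff, hψdeg, hψdef]; simp [coeff_X_pow, coeff_C]
    have hψcard : ψ.roots.card = k+2 := by rw [card_roots' ψ, hψdeg]
    have hψeval : ∀ ρ : ℂ, ((ψ.roots).map (fun z => ρ - z)).prod = ψ.eval ρ / c := by
      intro ρ
      rw [← prod_roots_eval ψ ρ, hψlead]
      field_simp
    have hroots : Φ.roots = 0 ::ₘ ψ.roots := by
      rw [hfactor] at hΦ0 ⊢
      rw [roots_mul hΦ0, roots_X, Multiset.singleton_add]
    rw [hroots]
    simp only [Multiset.map_cons, Multiset.prod_cons]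
    have hNcd : N*c*d ≠ 0 := mul_ne_zero (mul_ne_zero hN hc) hd
    obtain ⟨ρ, hρ⟩ : ∃ ρ : ℂ, (N*c*d)*ρ = N - t :=
      ⟨(N - t)/(N*c*d), by field_simp⟩
    have hρp : ((N*c*d)*ρ)^(k+1) = (N-t)^(k+1) := by rw [hρ]
    have hstep : ∀ z ∈ ψ.roots, t - N*z^(k+1)/(c*z^(k+2)+d)^2 = (N*c*d)*(z - ρ) := by
      intro z hz
      have hψroot : c*z^(k+2) - a*z^(k+1) + d = 0 := by
        have h2 := isRoot_of_mem_roots hz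
        rw [hψdef] at h2
        simpa [IsRoot] using h2
      have hz0 : z ≠ 0 := by
        intro h0
        rw [h0] at hψroot
        simp at hψroot
        exact hd hψroot
      have hD : c*z^(k+2) + d = a*z^(k+1) := by linear_combination hψroot
      have hDne : c*z^(k+2) + d ≠ 0 := by
        rw [hD]
        exact mul_ne_zero ha (pow_ne_zero _ hz0)
      have hq : N*z^(k+1)/(c*z^(k+2)+d)^2 = t - (N*c*d)*(z - ρ) := by
        rw [div_eq_iff (pow_ne_zero 2 hDne), hD]
        linear_combination (N*z^(k+1)*(a^2*z^(k+1) - 1 - a*d)) * had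
          + (N*z^(k+1)*a^2*d) * hψroot + (-((a*z^(k+1))^2)) * hρ
      rw [hq]
      ring
    rw [Multiset.map_congr rfl hstep, Multiset.prod_map_mul, Multiset.map_const',
        Multiset.prod_replicate, hψcard, prod_sub, hψcard, hψeval ρ]
    have hevρ : ψ.eval ρ = c*ρ^(k+2) - a*ρ^(k+1) + d := by rw [hψdef]; simp
    rw [hevρ]
    rw [show N^2*((0:ℂ)*c*(1+0*c)) = 0 from by ring]
    rw [Qc_pow _ _ rfl (k+2), Qc_pow _ _ rfl (k+1), Qc_pow _ _ rfl k]
    rw [show t - N * (0:ℂ)^(k+1)/(c*(0:ℂ)^(k+2)+d)^2 = t from by simp]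
    field_simp
    linear_combination ((-1:ℂ)^k) * ( (t*c*(N*c*d)^(k+1)*ρ^(k+1)) * hρ
      + (t*c*(N-t) - t*a*N*c*d) * hρp + (-(t*N*c*(N-t)^(k+1))) * had )
  have hinvpart : ((Φ.roots).map (fun z : ℂ => z⁻¹)).prod = (Φ.roots.prod)⁻¹ := by
    rw [show (fun z : ℂ => z⁻¹) = (fun z : ℂ => (id z)⁻¹) from rfl, Multiset.prod_map_inv]
    simp
  have hprodz : Φ.roots.prod = (-1)^k * (b/c) := by
    have e0 : ((Φ.roots).map (fun z => (0:ℂ) - z)).prod = -b/c := by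
      rw [hevalρ 0]
      congr 1
      rw [hΦdef]
      simp
    have e1 : ((Φ.roots).map (fun z => (0:ℂ) - z)).prod = (-1)^(k+3) * Φ.roots.prod := by
      rw [show (fun z : ℂ => (0:ℂ) - z) = (fun z : ℂ => (-1) * z) from funext fun z => by ring,
          Multiset.prod_map_mul, Multiset.map_const', Multiset.prod_replicate, hcard]
      simp [Multiset.map_id']
    have e2 : ((-1:ℂ))^(k+3) * ((-1:ℂ)^(k+3) * Φ.roots.prod) = (-1)^(k+3) * (-b/c) := by
      rw [← e1, e0]
    calc Φ.roots.prod = ((-1:ℂ))^(k+3) * ((-1:ℂ)^(k+3) * Φ.roots.prod) := by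
          rw [← mul_assoc, ← pow_add]
          rw [Even.neg_one_pow ⟨k+3, by ring⟩]
          ring
    _ = (-1)^(k+3) * (-b/c) := e2
    _ = (-1)^k * (b/c) := by ring
  by_cases hd : d = 0
  · subst hd
    have hbc : b*c = -1 := by linear_combination -h
    have hz0 : ∀ z ∈ Φ.roots, z ≠ 0 := by
      intro z hz h0
      apply hb
      have h2 := hroot z hz
      rw [h0] at h2
      simpa [zero_pow] using h2
    have hstep : ∀ z ∈ Φ.roots,
        t - N * z^(k+1) / (c*z^(k+2)+0)^2 = ((t+N)*z + N*(a*b)) * z⁻¹ := by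
      intro z hz
      have h1 := hfix z hz
      have hzne := hz0 z hz
      have hD : c*z^(k+2)+0 ≠ 0 := left_ne_zero_of_mul_eq_one h1
      have hzn : z^(k+2)*(a - c*z) = -b := by linear_combination (-1 : ℂ) * hroot z hz
      have hinv : (a - c*z) = (c*z^(k+2)+0)⁻¹ := by
        field_simp
        linear_combination h1
      have e2 : N * z^(k+1) / (c*z^(k+2)+0)^2 = N * (z^(k+1) * (a-c*z)^2) := by
        rw [hinv, div_eq_mul_inv, inv_pow]
        ring
      rw [e2, eq_mul_inv_iff_mul_eq₀ hzne]
      linear_combination (-(N*z)) * hbc + (-(N*(a - c*z))) * hzn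
    rw [Multiset.map_congr rfl hstep, Multiset.prod_map_mul, hinvpart, hprodz]
    rw [show N^2*(b*c*(1+b*c)) = 0 from by rw [hbc]; ring]
    by_cases ht : t + N = 0
    · have hcongr : ∀ z ∈ Φ.roots, (t+N)*z + N*(a*b) = N*(a*b) := by
        intro z _
        linear_combination z * ht
      rw [Multiset.map_congr rfl hcongr, Multiset.map_const', Multiset.prod_replicate, hcard]
      rw [show N*(1+2*(b*c)) - t = 0 from by rw [hbc]; linear_combination -ht]
      rw [Qc_pow _ _ rfl (k+2), Qc_pow _ _ rfl (k+1), Qc_pow _ _ rfl k]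
      rw [show ((0:ℂ))^(k+3) - 2*N*(1+b*c)*0^(k+2) + N^2*(1+b*c)^2*0^(k+1) = 0 from by
        simp [zero_pow], hbinv]
      rw [zero_pow (by omega : k+3 ≠ 0)]
      field_simp
      linear_combination (N^(k+3)*a^(k+3)*b^(k+2))*hbc
        + (-(N^(k+2)*a^(k+3)*b^(k+2)))*ht
    · obtain ⟨ρ, hρ⟩ : ∃ ρ : ℂ, (t+N)*ρ = -(N*(a*b)) :=
        ⟨-(N*(a*b))/(t+N), by field_simp⟩
      have hρp : (t+N)^(k+1) * ρ^(k+1) = (-1)^(k+1) * (N^(k+1) * (a^(k+1) * b^(k+1))) := by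
        have h2 : ((t+N)*ρ)^(k+1) = (-(N*(a*b)))^(k+1) := by rw [hρ]
        rw [mul_pow, neg_pow, mul_pow, mul_pow] at h2
        linear_combination h2
      have hcongr : ∀ z ∈ Φ.roots, (t+N)*z + N*(a*b) = (t+N)*(z - ρ) := by
        intro z _
        linear_combination hρ
      rw [Multiset.map_congr rfl hcongr, Multiset.prod_map_mul, Multiset.map_const',
          Multiset.prod_replicate, hcard, prod_sub, hcard, hevalρ ρ]
      have hevρ : Φ.eval ρ = c*ρ^(k+3) - a*ρ^(k+2) + 0*ρ - b := by rw [hΦdef]; simp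
      rw [hevρ]
      rw [Qc_pow _ _ rfl (k+2), Qc_pow _ _ rfl (k+1), Qc_pow _ _ rfl k, hbinv]
      rw [zero_pow (by omega : k+3 ≠ 0)]
      rw [hbc]
      rw [show N*(1+2*(-1:ℂ)) - t = -(t+N) from by ring]
      rw [neg_pow (t+N), neg_pow (t+N), neg_pow (t+N)]
      field_simp
      have hu : (t+N)^(k+2)*ρ^(k+2) = (-1)^(k+2)*(N*(a*b))^(k+2) := by rw [← mul_pow, hρ, neg_pow]
      have hsgn : ((-1:ℂ))^(k+3) * (-1)^(k+2) = -1 := by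
        rw [← pow_add]; exact Odd.neg_one_pow ⟨k+2, by ring⟩
      linear_combination ((-1:ℂ)^(k+3)*(t+N)*(c*ρ-a)) * hu
        + ((t+N)*(c*ρ-a)*(N*(a*b))^(k+2)) * hsgn
        + (-(c*(N*(a*b))^(k+2))) * hρ + (N^(k+3)*a^(k+3)*b^(k+2)) * hbc
  -- main case: b ≠ 0, d ≠ 0
  have hz0 : ∀ z ∈ Φ.roots, z ≠ 0 := by
    intro z hz h0
    apply hb
    have h2 := hroot z hz
    rw [h0] at h2
    simpa [zero_pow] using h2
  set v : ℂ := N*(1+2*(b*c)) - t with hvdef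
  obtain ⟨σ, hσ⟩ := IsAlgClosed.exists_pow_nat_eq (k := ℂ)
    (v^2 - 4*(N*c*d)*(N*(a*b))) (n := 2) (by norm_num)
  have hNcd : N*c*d ≠ 0 := by
    simp only [mul_ne_zero_iff]
    exact ⟨⟨hN, hc⟩, hd⟩
  set ρ1 : ℂ := (v + σ)/(2*(N*c*d)) with hρ1def
  set ρ2 : ℂ := (v - σ)/(2*(N*c*d)) with hρ2def
  have hsum : (N*c*d)*(ρ1+ρ2) = v := by
    rw [hρ1def, hρ2def]
    field_simp
    ring
  have hmulab : c*d*(ρ1*ρ2) = a*b := by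
    rw [hρ1def, hρ2def, div_mul_div_comm]
    rw [show (v+σ)*(v-σ) = v^2 - σ^2 by ring, hσ]
    rw [show v^2 - (v^2 - 4*(N*c*d)*(N*(a*b))) = 4*(N*c*d)*(N*(a*b)) by ring]
    field_simp
    ring
  have hprodS : (N*c*d)^2*(ρ1*ρ2) = N^2*(b*c*(1+b*c)) := by
    linear_combination (N^2*(c*d))*hmulab + (N^2*(b*c))*h
  have hQ : ∀ j, (N*c*d)^j * (ρ1^j + ρ2^j)
      = Qc (N^2*(b*c*(1+b*c))) v j := Qc_S (N*c*d) v _ ρ1 ρ2 hsum hprodS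
  have hstep : ∀ z ∈ Φ.roots,
      t - N * z^(k+1) / (c*z^(k+2)+d)^2 = ((N*c*d)*((z - ρ1)*(z - ρ2))) * z⁻¹ := by
    intro z hz
    have h1 := hfix z hz
    have hzne := hz0 z hz
    have hD : c*z^(k+2)+d ≠ 0 := left_ne_zero_of_mul_eq_one h1
    have hzn : z^(k+2)*(a - c*z) = d*z - b := by linear_combination (-1 : ℂ) * hroot z hz
    have hinv : (a - c*z) = (c*z^(k+2)+d)⁻¹ := by
      field_simp
      linear_combination h1
    have e2 : N * z^(k+1) / (c*z^(k+2)+d)^2 = N * (z^(k+1) * (a-c*z)^2) := by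
      rw [hinv, div_eq_mul_inv, inv_pow]
      ring
    rw [e2, eq_mul_inv_iff_mul_eq₀ hzne]
    linear_combination (-(N*(a - c*z))) * hzn + z * hsum + (-N) * hmulab + (-(N*z)) * h
  have hmap1 : ((Φ.roots).map (fun z => t - N * z^(k+1) / (c*z^(k+2)+d)^2)).prod
      = ((Φ.roots).map (fun z => ((N*c*d)*((z - ρ1)*(z - ρ2))) * z⁻¹)).prod := by
    congr 1
    exact Multiset.map_congr rfl hstep
  have hfac : ((Φ.roots).map (fun z => (N*c*d)*((z - ρ1)*(z - ρ2)))).prod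
      = (N*c*d)^(k+3) * (((-1)^(k+3) * (Φ.eval ρ1 / c)) * ((-1)^(k+3) * (Φ.eval ρ2 / c))) := by
    rw [Multiset.prod_map_mul, Multiset.map_const', Multiset.prod_replicate, hcard,
        Multiset.prod_map_mul, prod_sub, prod_sub, hcard, hevalρ ρ1, hevalρ ρ2]
  rw [hmap1, Multiset.prod_map_mul, hinvpart, hprodz, hfac]
  have hev1 : Φ.eval ρ1 = c*ρ1^(k+3) - a*ρ1^(k+2) + d*ρ1 - b := by rw [hΦdef]; simp
  have hev2 : Φ.eval ρ2 = c*ρ2^(k+3) - a*ρ2^(k+2) + d*ρ2 - b := by rw [hΦdef]; simp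
  rw [hev1, hev2, ← hQ (k+3), ← hQ (k+2), ← hQ (k+1)]
  have hE := Ecore k a b c d ρ1 ρ2 h hmulab.symm
  field_simp
  linear_combination (((-1:ℂ)^k)^2*N^(k+3)) * hE
    + (-(((-1:ℂ)^k)^2*c*b*N^(k+2)*(a^(k+3)*b^(k+1) + c^(k+1)*d^(k+3)))) * hsum
    + (-(((-1:ℂ)^k)^2*c*b*N^(k+2)*(a^(k+3)*b^(k+1) + c^(k+1)*d^(k+3)))) * hvdef

lemma cardPhi (k : ℕ) (a b c d : ℂ) (hc : c ≠ 0) :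
    ((C c * X ^ (k+3) - C a * X ^ (k+2) + C d * X - C b : Polynomial ℂ).roots).card = k+3 := by
  rw [card_roots']
  compute_degree! <;> simpa using hc

lemma evalprod (s : Multiset ℂ) (r : ℂ) :
    ((s.map fun m => X - C m).prod).eval r = (s.map fun m => r - m).prod := by
  rw [eval_multiset_prod, Multiset.map_map]
  simp

lemma esymm_coeff (s : Multiset ℂ) (k j : ℕ) (hcard : s.card = k+3) (hj : j ≤ k+3) :
    s.esymm j = (-1)^j * ((s.map fun m => X - C m).prod.coeff (k+3-j)) := by
  have h2 : k+3-j ≤ s.card := by omega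
  rw [Multiset.prod_X_sub_C_coeff s h2, hcard, show k+3 - (k+3-j) = j from by omega,
      ← mul_assoc, ← pow_add, Even.neg_one_pow ⟨j, by ring⟩, one_mul]

lemma finalmain (k : ℕ) (a b c d a' b' c' d' : ℂ)
    (h : a * d - b * c = 1) (hc : c ≠ 0)
    (h' : a' * d' - b' * c' = 1) (hc' : c' ≠ 0)
    (hX : b * c = b' * c')
    (M M' : Multiset ℂ)
    (hM : M = ((C c * X ^ (k+3) - C a * X ^ (k+2) + C d * X - C b : Polynomial ℂ).roots).map
        (fun z => ((k+2:ℕ):ℂ) * z ^ (k+1) / (c * z ^ (k+2) + d) ^ 2))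
    (hM' : M' = ((C c' * X ^ (k+3) - C a' * X ^ (k+2) + C d' * X - C b' : Polynomial ℂ).roots).map
        (fun z => ((k+2:ℕ):ℂ) * z ^ (k+1) / (c' * z ^ (k+2) + d') ^ 2)) :
    (∀ j ≤ k + 3, j ≠ k+2 → M.esymm j = M'.esymm j) ∧
      M.esymm (k+2) - ((k+2:ℕ):ℂ) ^ (k+2) * (a ^ (k+3) * b ^ (k+1) + c ^ (k+1) * d ^ (k+3)) =
        M'.esymm (k+2) - ((k+2:ℕ):ℂ) ^ (k+2) * (a' ^ (k+3) * b' ^ (k+1) + c' ^ (k+1) * d' ^ (k+3)) := by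
  have hMcard : M.card = k+3 := by
    rw [hM, Multiset.card_map]
    exact cardPhi k a b c d hc
  have hM'card : M'.card = k+3 := by
    rw [hM', Multiset.card_map]
    exact cardPhi k a' b' c' d' hc'
  have key : (M.map fun m => X - C m).prod = (M'.map fun m' => X - C m').prod
      + C ((-1)^k * ((k+2:ℕ):ℂ)^(k+2) *
          ((a^(k+3)*b^(k+1) + c^(k+1)*d^(k+3)) - (a'^(k+3)*b'^(k+1) + c'^(k+1)*d'^(k+3)))) * X := by
    apply Polynomial.funext
    intro r
    rw [eval_add, eval_mul, eval_C, eval_X, evalprod, evalprod, hM, hM',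
        Multiset.map_map, Multiset.map_map]
    show ((Polynomial.roots _).map (fun z => r - ((k+2:ℕ):ℂ) * z^(k+1) / (c * z^(k+2) + d)^2)).prod
      = ((Polynomial.roots _).map (fun z => r - ((k+2:ℕ):ℂ) * z^(k+1) / (c' * z^(k+2) + d')^2)).prod + _
    rw [master k a b c d h hc r, master k a' b' c' d' h' hc' r, hX]
    ring
  constructor
  · intro j hj hjne
    rw [esymm_coeff M k j hMcard hj, esymm_coeff M' k j hM'card hj, key, coeff_add,
        coeff_C_mul, coeff_X, if_neg (by omega : ¬(1 = k+3-j))]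
    ring
  · have hj : k+2 ≤ k+3 := by omega
    rw [esymm_coeff M k (k+2) hMcard hj, esymm_coeff M' k (k+2) hM'card hj, key, coeff_add,
        coeff_C_mul, coeff_X, if_pos (by omega : 1 = k+3-(k+2))]
    have expand : ((-1:ℂ))^(k+2) * ((-1:ℂ))^k = 1 := by
      rw [← pow_add]; exact Even.neg_one_pow ⟨k+1, by ring⟩
    push_cast
    linear_combination (((k:ℂ)+2)^(k+2) *
      ((a^(k+3)*b^(k+1) + c^(k+1)*d^(k+3)) - (a'^(k+3)*b'^(k+1) + c'^(k+1)*d'^(k+3)))) * expand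

end Stmt13Aux

/-- Theorem 2.6 (invariance): for a normalized bicritical map
`f(z) = (a z^n + b)/(c z^n + d)` (`ad - bc = 1`, `c ≠ 0`), let `σ_k` be the
`k`-th elementary symmetric function of the multiset of the `n+1` fixed-point
multipliers, i.e. of the images of the roots (with multiplicity) of
`Φ(z) = c z^{n+1} - a z^n + d z - b` under `z ↦ n z^{n-1}/(c z^n + d)²`.
If two such maps have the same invariant `X = bc`, then `σ_k = σ'_k` for all
`k ≠ n`, while `σ_n - nⁿ Y = σ'_n - nⁿ Y'` where
`Y = a^{n+1} b^{n-1} + c^{n-1} d^{n+1}`. -/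
theorem stmt13 (n : ℕ) (hn : 2 ≤ n) (a b c d a' b' c' d' : ℂ)
    (h : a * d - b * c = 1) (hc : c ≠ 0)
    (h' : a' * d' - b' * c' = 1) (hc' : c' ≠ 0)
    (hX : b * c = b' * c') :
    let M : Multiset ℂ :=
      ((Polynomial.C c * Polynomial.X ^ (n + 1) - Polynomial.C a * Polynomial.X ^ n +
        Polynomial.C d * Polynomial.X - Polynomial.C b : Polynomial ℂ).roots).map
        fun z => (n : ℂ) * z ^ (n - 1) / (c * z ^ n + d) ^ 2
    let M' : Multiset ℂ :=
      ((Polynomial.C c' * Polynomial.X ^ (n + 1) - Polynomial.C a' * Polynomial.X ^ n +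
        Polynomial.C d' * Polynomial.X - Polynomial.C b' : Polynomial ℂ).roots).map
        fun z => (n : ℂ) * z ^ (n - 1) / (c' * z ^ n + d') ^ 2
    (∀ k ≤ n + 1, k ≠ n → M.esymm k = M'.esymm k) ∧
      M.esymm n - (n : ℂ) ^ n * (a ^ (n + 1) * b ^ (n - 1) + c ^ (n - 1) * d ^ (n + 1)) =
        M'.esymm n - (n : ℂ) ^ n * (a' ^ (n + 1) * b' ^ (n - 1) + c' ^ (n - 1) * d' ^ (n + 1)) := by
  obtain ⟨k, rfl⟩ : ∃ k, n = k + 2 := ⟨n - 2, by omega⟩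
  intro M M'
  have hM : M = ((Polynomial.C c * Polynomial.X ^ (k+3) - Polynomial.C a * Polynomial.X ^ (k+2) +
      Polynomial.C d * Polynomial.X - Polynomial.C b : Polynomial ℂ).roots).map
      (fun z => ((k+2:ℕ):ℂ) * z ^ (k+1) / (c * z ^ (k+2) + d) ^ 2) := by
    show ((Polynomial.C c * Polynomial.X ^ (k+2+1) - Polynomial.C a * Polynomial.X ^ (k+2) +
      Polynomial.C d * Polynomial.X - Polynomial.C b : Polynomial ℂ).roots).map
      (fun z => ((k+2:ℕ):ℂ) * z ^ (k+2-1) / (c * z ^ (k+2) + d) ^ 2) = _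
    simp only [show k+2-1 = k+1 from by omega, show k+2+1 = k+3 from by omega]
  have hM' : M' = ((Polynomial.C c' * Polynomial.X ^ (k+3) - Polynomial.C a' * Polynomial.X ^ (k+2) +
      Polynomial.C d' * Polynomial.X - Polynomial.C b' : Polynomial ℂ).roots).map
      (fun z => ((k+2:ℕ):ℂ) * z ^ (k+1) / (c' * z ^ (k+2) + d') ^ 2) := by
    show ((Polynomial.C c' * Polynomial.X ^ (k+2+1) - Polynomial.C a' * Polynomial.X ^ (k+2) +
      Polynomial.C d' * Polynomial.X - Polynomial.C b' : Polynomial ℂ).roots).map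
      (fun z => ((k+2:ℕ):ℂ) * z ^ (k+2-1) / (c' * z ^ (k+2) + d') ^ 2) = _
    simp only [show k+2-1 = k+1 from by omega, show k+2+1 = k+3 from by omega]
  simp only [show k+2-1 = k+1 from by omega, show k+2+1 = k+3 from by omega]
  exact Stmt13Aux.finalmain k a b c d a' b' c' d' h hc h' hc' hX M M' hM hM'
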